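/- arXiv:1901.02588 — 3 statements merged into one kernel-verified Lean document; each statement's English description precedes it below -/
import Mathlib

section
/- Let n ≥ 1, let Ω ⊆ ℝⁿ be a Lebesgue measurable set of finite measure, let δ ∈ (0,1), let v, w : Ω → ℝ be bounded measurable functions, and let g : Ω → ℝ be Lebesgue integrable on Ω. For each integer k ≥ 1 define v_k : Ω → ℝ by v_k(x) = v(x) if the fractional part of k·x₁ lies in [0,δ), and v_k(x) = w(x) otherwise, where x₁ denotes the first coordinate of x. Then lim_{k→∞} ∫_Ω v_k(x) g(x) dx = ∫_Ω ( δ·v(x) + (1−δ)·w(x) ) g(x) dx. -/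
open MeasureTheory Filter Topology
open scoped ENNReal NNReal

lemma rho_int (δ : ℝ) (hδ0 : 0 < δ) (hδ1 : δ < 1) (c : ℝ) :
    ∫ s in Set.Ioc (0:ℝ) 1, ((if Int.fract (c + s) < δ then (1:ℝ) else 0) - δ) = 0 := by
  set ρ : ℝ → ℝ := fun t => (if Int.fract t < δ then (1:ℝ) else 0) - δ with hρ
  have hper : Function.Periodic ρ 1 := by
    intro t
    simp [hρ, Int.fract_add_one]
  have h1 : ∫ s in Set.Ioc (0:ℝ) 1, ρ (c + s) = ∫ s in (0:ℝ)..1, ρ (c + s) := by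
    rw [intervalIntegral.integral_of_le zero_le_one]
  have h2 : ∫ s in (0:ℝ)..1, ρ (c + s) = ∫ s in c..(c+1), ρ s := by
    simpa using intervalIntegral.integral_comp_add_left (a := 0) (b := 1) ρ c
  have h3 : ∫ s in c..(c+1), ρ s = ∫ s in (0:ℝ)..(0+1), ρ s := hper.intervalIntegral_add_eq c 0
  have h4 : ∫ s in (0:ℝ)..(0+1), ρ s = ∫ s in Set.Ioc (0:ℝ) 1, ρ s := by
    rw [zero_add, intervalIntegral.integral_of_le zero_le_one]
  have h5 : ∫ s in Set.Ioc (0:ℝ) 1, ρ s = 0 := by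
    have hae : ∀ᵐ s ∂(volume.restrict (Set.Ioc (0:ℝ) 1)), s ∈ Set.Ioo (0:ℝ) 1 := by
      have hsub : (Set.Ioc (0:ℝ) 1) \ {1} ⊆ Set.Ioo 0 1 := fun x hx =>
        ⟨hx.1.1, lt_of_le_of_ne hx.1.2 (by simpa using hx.2)⟩
      have h0 : volume ({(1:ℝ)} : Set ℝ) = 0 := measure_singleton 1
      rw [ae_restrict_iff' measurableSet_Ioc]
      filter_upwards [measure_eq_zero_iff_ae_notMem.mp h0] with x hx1 hx2
      exact hsub ⟨hx2, hx1⟩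
    have hcongr : ∀ᵐ s ∂(volume.restrict (Set.Ioc (0:ℝ) 1)),
        ρ s = Set.indicator (Set.Ico (0:ℝ) δ) (fun _ => (1:ℝ)) s - δ := by
      filter_upwards [hae] with s hs
      have hf : Int.fract s = s := Int.fract_eq_self.mpr ⟨hs.1.le, hs.2⟩
      simp only [hρ, hf, Set.indicator]
      by_cases h : s < δ
      · simp [h, Set.mem_Ico, hs.1.le]
      · simp [h, Set.mem_Ico]
    have hfin : (volume.restrict (Set.Ioc (0:ℝ) 1)) (Set.Ico 0 δ) < ⊤ := by
      rw [Measure.restrict_apply measurableSet_Ico]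
      exact lt_of_le_of_lt (measure_mono Set.inter_subset_left)
        (by simp [Real.volume_Ico])
    rw [integral_congr_ae hcongr,
      integral_sub ((integrable_indicator_iff measurableSet_Ico).mpr
          (integrableOn_const hfin.ne))
        (integrable_const δ)]
    rw [integral_indicator measurableSet_Ico]
    have hint : Set.Ico (0:ℝ) δ ∩ Set.Ioc 0 1 = Set.Ioo 0 δ := by
      ext x
      simp only [Set.mem_inter_iff, Set.mem_Ico, Set.mem_Ioc, Set.mem_Ioo]
      constructor
      · rintro ⟨⟨_, h2⟩, ⟨h3, _⟩⟩; exact ⟨h3, h2⟩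
      · rintro ⟨h1, h2⟩; exact ⟨⟨h1.le, h2⟩, h1, h2.le.trans hδ1.le⟩
    rw [Measure.restrict_restrict measurableSet_Ico, hint]
    simp [Real.volume_Ioo, Real.volume_Ioc, ENNReal.toReal_ofReal, hδ0.le]
  rw [h1, h2, h3, h4, h5]

lemma translation_cont {n : ℕ} (φ : EuclideanSpace ℝ (Fin n) → ℝ)
    (hφ : Integrable φ (volume : Measure (EuclideanSpace ℝ (Fin n))))
    (e : EuclideanSpace ℝ (Fin n)) :
    Tendsto (fun h : ℝ => ∫ x, ‖φ (x + h • e) - φ x‖) (𝓝 0) (𝓝 0) := by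
  set μ : Measure (EuclideanSpace ℝ (Fin n)) := volume
  set φL : Lp ℝ 1 μ := hφ.toL1 φ with hφL
  set g : ℝ → C(EuclideanSpace ℝ (Fin n), EuclideanSpace ℝ (Fin n)) :=
    fun h => ⟨fun x => x + h • e, by continuity⟩ with hg
  have hpres : ∀ h : ℝ, MeasurePreserving (⇑(g h)) μ μ :=
    fun h => measurePreserving_add_right μ (h • e)
  have hgc : Continuous g := by
    apply ContinuousMap.continuous_of_continuous_uncurry
    exact continuous_snd.add ((continuous_fst.smul continuous_const))
  have hT : Tendsto (fun h : ℝ => Lp.compMeasurePreserving (⇑(g h)) (hpres h) φL) (𝓝 0)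
      (𝓝 (Lp.compMeasurePreserving (⇑(g 0)) (hpres 0) φL)) :=
    Filter.Tendsto.compMeasurePreservingLp tendsto_const_nhds (hgc.tendsto 0) hpres (hpres 0)
      ENNReal.one_ne_top
  have hid : Lp.compMeasurePreserving (⇑(g 0)) (hpres 0) φL = φL := by
    apply Lp.ext
    filter_upwards [Lp.coeFn_compMeasurePreserving φL (hpres 0)] with x hx
    rw [hx]
    simp [g]
  rw [hid] at hT
  have hnorm : Tendsto (fun h : ℝ =>
      ‖Lp.compMeasurePreserving (⇑(g h)) (hpres h) φL - φL‖) (𝓝 0) (𝓝 0) := by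
    have := (hT.sub (tendsto_const_nhds (x := φL))).norm
    simpa using this
  refine hnorm.congr fun h => ?_
  rw [L1.norm_eq_integral_norm]
  apply integral_congr_ae
  filter_upwards [Lp.coeFn_sub (Lp.compMeasurePreserving (⇑(g h)) (hpres h) φL) φL,
    Lp.coeFn_compMeasurePreserving φL (hpres h),
    (hpres h).quasiMeasurePreserving.ae_eq_comp hφ.coeFn_toL1,
    hφ.coeFn_toL1] with x h1 h2 h3 h4
  rw [h1, Pi.sub_apply, h2, h3, h4]
  simp [g]

lemma key_lemma {n : ℕ} (hn : 1 ≤ n) {δ : ℝ} (hδ0 : 0 < δ) (hδ1 : δ < 1)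
    (φ : EuclideanSpace ℝ (Fin n) → ℝ) (hφm : Measurable φ)
    (hφ : Integrable φ (volume : Measure (EuclideanSpace ℝ (Fin n)))) :
    Tendsto (fun k : ℕ => ∫ x,
        ((if Int.fract ((k : ℝ) * x ⟨0, hn⟩) < δ then (1:ℝ) else 0) - δ) * φ x)
      atTop (𝓝 0) := by
  set i : Fin n := ⟨0, hn⟩
  set e : EuclideanSpace ℝ (Fin n) := EuclideanSpace.single i (1:ℝ) with he
  set ρ : ℝ → ℝ := fun t => (if Int.fract t < δ then (1:ℝ) else 0) - δ with hρ
  set μs : Measure ℝ := volume.restrict (Set.Ioc (0:ℝ) 1) with hμs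
  have hρm : Measurable ρ :=
    (Measurable.ite (measurableSet_lt measurable_fract measurable_const)
      measurable_const measurable_const).sub measurable_const
  have hρb : ∀ t, ‖ρ t‖ ≤ 1 := by
    intro t
    simp only [hρ, Real.norm_eq_abs]
    by_cases h : Int.fract t < δ
    · rw [if_pos h]; rw [abs_le]; constructor <;> nlinarith
    · rw [if_neg h]; rw [abs_le]; constructor <;> nlinarith
  have hπm : Measurable (fun x : EuclideanSpace ℝ (Fin n) => x i) :=
    (EuclideanSpace.proj i).continuous.measurable
  have happ : ∀ (x : EuclideanSpace ℝ (Fin n)) (h : ℝ), (x + h • e) i = x i + h := by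
    intro x h
    simp [he, PiLp.add_apply, PiLp.smul_apply, EuclideanSpace.single_apply]
  -- set up translation continuity
  have Htc := translation_cont φ hφ e
  rw [Metric.tendsto_atTop]
  intro ε hε
  have Hev : ∀ᶠ h : ℝ in 𝓝 0, dist (∫ x, ‖φ (x + h • e) - φ x‖) (0:ℝ) < ε/2 :=
    Metric.tendsto_nhds.mp Htc (ε/2) (half_pos hε)
  obtain ⟨η, hη0, hηball⟩ := Metric.eventually_nhds_iff_ball.mp Hev
  obtain ⟨N, hN⟩ := exists_nat_gt (1/η)
  refine ⟨N + 1, fun k hk => ?_⟩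
  have hk1 : 1 ≤ k := le_trans (Nat.le_add_left 1 N) hk
  have hkR : (0:ℝ) < (k:ℕ) := by exact_mod_cast lt_of_lt_of_le one_pos hk1
  have hNk : (1:ℝ)/η < (k:ℝ) := by
    refine lt_of_lt_of_le hN ?_
    exact_mod_cast le_trans (Nat.le_succ N) hk
  have hkη : 1/(k:ℝ) < η := by
    rw [div_lt_iff₀ hkR]
    rw [div_lt_iff₀ hη0] at hNk
    linarith [hNk]
  -- integrability facts
  have hIint : ∀ c : EuclideanSpace ℝ (Fin n), Integrable (fun x => ρ ((k:ℝ) * x i) * φ (x + c)) := by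
    intro c
    refine Integrable.bdd_mul (c := 1) ?_ ?_ (Eventually.of_forall fun x => hρb _)
    · exact hφ.comp_add_right c
    · exact (hρm.comp (measurable_const.mul hπm)).aestronglyMeasurable
  have hIint0 : Integrable (fun x => ρ ((k:ℝ) * x i) * φ x) := by
    have := hIint 0
    simpa using this
  -- Fubini
  have hFm : Measurable (Function.uncurry fun (s:ℝ) (x : EuclideanSpace ℝ (Fin n)) =>
      ρ ((k:ℝ) * x i + s) * φ x) := by
    apply Measurable.mul
    · exact hρm.comp ((measurable_const.mul (hπm.comp measurable_snd)).add measurable_fst)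
    · exact hφm.comp measurable_snd
  have hcomp : ∀ c : EuclideanSpace ℝ (Fin n), Integrable (fun x => φ (x + c)) := by
    intro c
    have := ((measurePreserving_add_right
      (volume : Measure (EuclideanSpace ℝ (Fin n))) c).integrable_comp
      hφ.aestronglyMeasurable).mpr hφ
    exact this
  have Fint : Integrable (Function.uncurry fun (s:ℝ) (x : EuclideanSpace ℝ (Fin n)) =>
      ρ ((k:ℝ) * x i + s) * φ x) (μs.prod volume) := by
    refine ⟨hFm.aestronglyMeasurable, ?_⟩
    have hb : (∫⁻ z, ‖(Function.uncurry fun (s:ℝ) (x : EuclideanSpace ℝ (Fin n)) =>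
        ρ ((k:ℝ) * x i + s) * φ x) z‖₊ ∂(μs.prod volume)) ≤
        ∫⁻ z : ℝ × EuclideanSpace ℝ (Fin n), ‖φ z.2‖₊ ∂(μs.prod volume) := by
      refine lintegral_mono fun z => ?_
      simp only [Function.uncurry]
      rw [ENNReal.coe_le_coe, nnnorm_mul]
      calc ‖ρ ((k:ℝ) * z.2 i + z.1)‖₊ * ‖φ z.2‖₊
          ≤ 1 * ‖φ z.2‖₊ := by gcongr; exact_mod_cast hρb _
        _ = ‖φ z.2‖₊ := one_mul _
    refine lt_of_le_of_lt hb ?_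
    have hμ1 : μs Set.univ = 1 := by
      rw [hμs, Measure.restrict_apply_univ]
      simp [Real.volume_Ioc]
    calc ∫⁻ (z : ℝ × EuclideanSpace ℝ (Fin n)), (‖φ z.2‖₊ : ℝ≥0∞) ∂(μs.prod volume)
        = ∫⁻ y, (‖φ y‖₊ : ℝ≥0∞) ∂(Measure.map Prod.snd (μs.prod volume)) :=
          (lintegral_map hφm.nnnorm.coe_nnreal_ennreal measurable_snd).symm
      _ = ∫⁻ y, (‖φ y‖₊ : ℝ≥0∞) ∂((μs Set.univ) • volume) := by
          rw [Measure.map_snd_prod]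
      _ = (μs Set.univ) * ∫⁻ y, (‖φ y‖₊ : ℝ≥0∞) := by rw [lintegral_smul_measure, smul_eq_mul]
      _ < ⊤ := by rw [hμ1, one_mul]; exact hφ.2
  have Jint : Integrable (fun s => ∫ x, ρ ((k:ℝ) * x i + s) * φ x) μs :=
    Fint.integral_prod_left
  have swap0 : ∫ s in Set.Ioc (0:ℝ) 1, (∫ x, ρ ((k:ℝ) * x i + s) * φ x) = 0 := by
    have hs := MeasureTheory.integral_integral_swap Fint
    have hzero : ∀ x : EuclideanSpace ℝ (Fin n),
        ∫ s in Set.Ioc (0:ℝ) 1, ρ ((k:ℝ) * x i + s) * φ x = 0 := by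
      intro x
      rw [MeasureTheory.integral_mul_const]
      rw [show (∫ s in Set.Ioc (0:ℝ) 1, ρ ((k:ℝ) * x i + s)) = 0 from
        rho_int δ hδ0 hδ1 ((k:ℝ) * x i), zero_mul]
    calc ∫ s in Set.Ioc (0:ℝ) 1, (∫ x, ρ ((k:ℝ) * x i + s) * φ x)
        = ∫ x, (∫ s in Set.Ioc (0:ℝ) 1, ρ ((k:ℝ) * x i + s) * φ x) ∂volume := hs
      _ = 0 := by simp only [hzero, integral_zero]
  have key_eq : ∀ s : ℝ, (∫ x, ρ ((k:ℝ) * x i + s) * φ x)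
      = ∫ x, ρ ((k:ℝ) * x i) * φ (x + (-(s/(k:ℝ))) • e) := by
    intro s
    have htr := integral_add_right_eq_self
      (μ := (volume : Measure (EuclideanSpace ℝ (Fin n))))
      (fun x => ρ ((k:ℝ) * x i + s) * φ x) ((-(s/(k:ℝ))) • e)
    rw [← htr]
    congr 1
    funext x
    rw [happ]
    have harg : (k:ℝ) * (x i + (-(s/(k:ℝ)))) + s = (k:ℝ) * x i := by
      field_simp
      ring
    rw [harg]
  haveI : IsFiniteMeasure μs := by
    constructor
    rw [hμs, Measure.restrict_apply_univ]
    simp [Real.volume_Ioc]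
  have hself : ∫ (_ : ℝ) in Set.Ioc (0:ℝ) 1, (∫ x, ρ ((k:ℝ) * x i) * φ x) ∂volume
      = ∫ x, ρ ((k:ℝ) * x i) * φ x := by
    rw [setIntegral_const]
    simp [Real.volume_Ioc]
  have hI : ∫ x, ρ ((k:ℝ) * x i) * φ x
      = ∫ s in Set.Ioc (0:ℝ) 1,
          ((∫ x, ρ ((k:ℝ) * x i) * φ x) - ∫ x, ρ ((k:ℝ) * x i + s) * φ x) := by
    rw [integral_sub (integrable_const _) Jint]
    rw [swap0, sub_zero, hself]
  -- final estimate
  have hbound : ∀ s ∈ Set.Ioc (0:ℝ) 1,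
      ‖(∫ x, ρ ((k:ℝ) * x i) * φ x) - ∫ x, ρ ((k:ℝ) * x i + s) * φ x‖ ≤ ε/2 := by
    intro s hs
    set h : ℝ := -(s/(k:ℝ)) with hh
    rw [key_eq s, ← integral_sub hIint0 (hIint (h • e))]
    refine le_trans (norm_integral_le_integral_norm _) ?_
    have hmono : ∀ x : EuclideanSpace ℝ (Fin n),
        ‖ρ ((k:ℝ) * x i) * φ x - ρ ((k:ℝ) * x i) * φ (x + h • e)‖
          ≤ ‖φ (x + h • e) - φ x‖ := by
      intro x
      rw [← mul_sub, norm_mul]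
      calc ‖ρ ((k:ℝ) * x i)‖ * ‖φ x - φ (x + h • e)‖
          ≤ 1 * ‖φ x - φ (x + h • e)‖ := by gcongr; exact hρb _
        _ = ‖φ (x + h • e) - φ x‖ := by rw [one_mul, norm_sub_rev]
    refine le_trans (integral_mono ((hIint0.sub (hIint (h • e))).norm)
      (((hcomp (h • e)).sub hφ).norm) hmono) ?_
    have hball : h ∈ Metric.ball (0:ℝ) η := by
      rw [Metric.mem_ball, dist_zero_right, hh, Real.norm_eq_abs, abs_neg,
        abs_of_nonneg (div_nonneg hs.1.le hkR.le)]
      calc s / (k:ℝ) ≤ 1 / (k:ℝ) := by gcongr; exact hs.2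
        _ < η := hkη
    have := hηball h hball
    rw [dist_zero_right, Real.norm_eq_abs] at this
    exact le_of_lt (lt_of_le_of_lt (le_abs_self _) this)
  have haesm : AEStronglyMeasurable
      (fun s : ℝ => (∫ x, ρ ((k:ℝ) * x i) * φ x) - ∫ x, ρ ((k:ℝ) * x i + s) * φ x) μs :=
    (aestronglyMeasurable_const.sub Jint.aestronglyMeasurable)
  have hfin : volume (Set.Ioc (0:ℝ) 1) < ⊤ := by simp [Real.volume_Ioc]
  show dist (∫ x, ρ ((k:ℝ) * x i) * φ x) 0 < ε
  rw [dist_zero_right, hI]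
  refine lt_of_le_of_lt (norm_setIntegral_le_of_norm_le_const hfin hbound) ?_
  rw [Measure.real, Real.volume_Ioc]
  simp only [sub_zero, ENNReal.toReal_ofReal zero_le_one, mul_one]
  linarith

/-- Riemann–Lebesgue-type weak convergence of rapidly oscillating mixtures of
two controls: the patterned controls `v_k` converge weakly (against any
integrable `g`) to the convex combination `δ·v + (1-δ)·w`. -/
theorem stmt_2 (n : ℕ) (hn : 1 ≤ n) (Ω : Set (EuclideanSpace ℝ (Fin n)))
    (hΩ : MeasurableSet Ω) (hΩfin : volume Ω < ⊤)
    (δ : ℝ) (hδ : δ ∈ Set.Ioo (0 : ℝ) 1)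
    (v w : EuclideanSpace ℝ (Fin n) → ℝ)
    (hv : Measurable v) (hw : Measurable w)
    (Cv : ℝ) (hvb : ∀ x, |v x| ≤ Cv) (Cw : ℝ) (hwb : ∀ x, |w x| ≤ Cw)
    (g : EuclideanSpace ℝ (Fin n) → ℝ) (hg : IntegrableOn g Ω) :
    Filter.Tendsto
      (fun k : ℕ => ∫ x in Ω,
        (if Int.fract ((k : ℝ) * x ⟨0, hn⟩) < δ then v x else w x) * g x)
      Filter.atTop
      (nhds (∫ x in Ω, (δ * v x + (1 - δ) * w x) * g x)) := by
  obtain ⟨hδ0, hδ1⟩ := hδ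
  have hCv0 : 0 ≤ Cv := le_trans (abs_nonneg _) (hvb (Classical.arbitrary _))
  have hCw0 : 0 ≤ Cw := le_trans (abs_nonneg _) (hwb (Classical.arbitrary _))
  -- measurable representative of g on Ω
  set gm : EuclideanSpace ℝ (Fin n) → ℝ := hg.1.mk g with hgm_def
  have hgm_sm : StronglyMeasurable gm := hg.1.stronglyMeasurable_mk
  have hgg' : g =ᵐ[volume.restrict Ω] gm := hg.1.ae_eq_mk
  have hgmint : IntegrableOn gm Ω := (integrable_congr hgg').mp hg
  -- the perturbation function
  set φ : EuclideanSpace ℝ (Fin n) → ℝ :=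
    Ω.indicator (fun x => (v x - w x) * gm x) with hφ_def
  have hφm : Measurable φ :=
    (((hv.sub hw).mul hgm_sm.measurable).indicator hΩ)
  have hvwb : ∀ x, ‖v x - w x‖ ≤ Cv + Cw := by
    intro x
    calc ‖v x - w x‖ ≤ ‖v x‖ + ‖w x‖ := norm_sub_le _ _
      _ ≤ Cv + Cw := add_le_add (hvb x) (hwb x)
  have hφint : Integrable φ volume := by
    rw [hφ_def, integrable_indicator_iff hΩ]
    exact hgmint.bdd_mul (c := Cv + Cw) (hv.sub hw).aestronglyMeasurable (Eventually.of_forall hvwb)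
  -- integrability of both integrands on Ω
  have hmeas_if : ∀ k : ℕ, AEStronglyMeasurable
      (fun x : EuclideanSpace ℝ (Fin n) =>
        if Int.fract ((k : ℝ) * x ⟨0, hn⟩) < δ then v x else w x) (volume.restrict Ω) := by
    intro k
    refine Measurable.aestronglyMeasurable ?_
    refine Measurable.ite ?_ hv hw
    exact measurableSet_lt
      (measurable_fract.comp (measurable_const.mul
        (EuclideanSpace.proj (⟨0, hn⟩ : Fin n)).continuous.measurable)) measurable_const
  have h1 : ∀ k : ℕ, IntegrableOn
      (fun x => (if Int.fract ((k : ℝ) * x ⟨0, hn⟩) < δ then v x else w x) * g x) Ω := by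
    intro k
    refine hg.bdd_mul (c := Cv + Cw) (hmeas_if k) (Eventually.of_forall fun x => ?_)
    by_cases h : Int.fract ((k : ℝ) * x ⟨0, hn⟩) < δ
    · rw [if_pos h]; calc ‖v x‖ ≤ Cv := hvb x
        _ ≤ Cv + Cw := by linarith
    · rw [if_neg h]; calc ‖w x‖ ≤ Cw := hwb x
        _ ≤ Cv + Cw := by linarith
  have h2 : IntegrableOn (fun x => (δ * v x + (1 - δ) * w x) * g x) Ω := by
    refine hg.bdd_mul (c := Cv + Cw) ((hv.const_mul δ).add (hw.const_mul (1 - δ))).aestronglyMeasurable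
      (Eventually.of_forall fun x => ?_)
    have h3 := hvb x
    have h4 := hwb x
    rw [Real.norm_eq_abs]
    calc |δ * v x + (1 - δ) * w x| ≤ |δ * v x| + |(1 - δ) * w x| := abs_add_le _ _
      _ = δ * |v x| + (1 - δ) * |w x| := by
          rw [abs_mul, abs_mul, abs_of_pos hδ0, abs_of_pos (by linarith : (0:ℝ) < 1 - δ)]
      _ ≤ Cv + Cw := by nlinarith [abs_nonneg (v x), abs_nonneg (w x)]
  -- the difference identity
  have diff_eq : ∀ k : ℕ,
      (∫ x in Ω, (if Int.fract ((k : ℝ) * x ⟨0, hn⟩) < δ then v x else w x) * g x)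
        - (∫ x in Ω, (δ * v x + (1 - δ) * w x) * g x)
      = ∫ x, ((if Int.fract ((k : ℝ) * x ⟨0, hn⟩) < δ then (1:ℝ) else 0) - δ) * φ x := by
    intro k
    rw [← integral_sub (h1 k) h2]
    have step1 : ∫ x in Ω,
        ((if Int.fract ((k : ℝ) * x ⟨0, hn⟩) < δ then v x else w x) * g x
          - (δ * v x + (1 - δ) * w x) * g x)
        = ∫ x in Ω, ((if Int.fract ((k : ℝ) * x ⟨0, hn⟩) < δ then (1:ℝ) else 0) - δ)
            * ((v x - w x) * gm x) := by
      refine integral_congr_ae ?_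
      filter_upwards [hgg'] with x hx
      rw [← hx]
      by_cases h : Int.fract ((k : ℝ) * x ⟨0, hn⟩) < δ
      · rw [if_pos h, if_pos h]; ring
      · rw [if_neg h, if_neg h]; ring
    rw [step1, ← integral_indicator hΩ]
    congr 1
    funext x
    by_cases hx : x ∈ Ω
    · rw [Set.indicator_of_mem hx, hφ_def, Set.indicator_of_mem hx]
    · rw [Set.indicator_of_notMem hx, hφ_def, Set.indicator_of_notMem hx, mul_zero]
  have hkey := key_lemma hn hδ0 hδ1 φ hφm hφint
  rw [← tendsto_sub_nhds_zero_iff]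
  exact hkey.congr fun k => (diff_eq k).symm
end

section
/- Let m ≥ 1 and 0 < τ < 1 be real numbers, and let ψ, A, B ∈ ℝ satisfy |A − B| < 1/2. Define v* := ( (1/2)ψ + m·A + τ·B ) / (m+τ) and v̄ := min( B+1, max( B−1, v* ) ). Then m·|v̄ − A| ≤ 2·|ψ| + τ. -/
/-- Pointwise estimate (5.15): if `|A - B| < 1/2`, `m ≥ 1`, `0 < τ < 1`, and
`v̄` is the projection onto `[B-1, B+1]` of the unconstrained maximizer
`v* = ((1/2)ψ + mA + τB)/(m+τ)`, then `m|v̄ - A| ≤ 2|ψ| + τ`. -/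
theorem stmt_4 (m τ ψ A B : ℝ) (hm : 1 ≤ m) (hτ0 : 0 < τ) (hτ1 : τ < 1)
    (hAB : |A - B| < 1 / 2) :
    m * |min (B + 1) (max (B - 1) (((1 / 2) * ψ + m * A + τ * B) / (m + τ))) - A| ≤
      2 * |ψ| + τ := by
  set v : ℝ := ((1 / 2) * ψ + m * A + τ * B) / (m + τ) with hv
  have hs : (0:ℝ) < m + τ := by linarith
  obtain ⟨hAB1, hAB2⟩ := abs_lt.mp hAB
  have hvA : v - A = ((1/2) * ψ + τ * (B - A)) / (m + τ) := by
    rw [hv]; field_simp; ring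
  have hnum : |(1/2) * ψ + τ * (B - A)| ≤ |ψ|/2 + τ/2 := by
    have h1 : |(1/2) * ψ| = |ψ|/2 := by rw [abs_mul, show |(1/2:ℝ)| = 1/2 from abs_of_pos (by norm_num)]; ring
    have h2 : |τ * (B - A)| ≤ τ/2 := by
      rw [abs_mul, abs_of_pos hτ0]
      have : |B - A| ≤ 1/2 := by rw [abs_sub_comm]; linarith [le_of_lt hAB]
      nlinarith
    calc |(1/2) * ψ + τ * (B - A)| ≤ |(1/2) * ψ| + |τ * (B - A)| := abs_add_le _ _
      _ ≤ |ψ|/2 + τ/2 := by rw [h1]; linarith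
  have hmain : m * |v - A| ≤ |ψ|/2 + τ/2 := by
    rw [hvA, abs_div, abs_of_pos hs]
    rw [← mul_div_assoc, div_le_iff₀ hs]
    have hψ : 0 ≤ |ψ| := abs_nonneg _
    nlinarith [abs_nonneg ((1/2) * ψ + τ * (B - A))]
  have hclamp : |min (B + 1) (max (B - 1) v) - A| ≤ |v - A| := by
    rcases le_total v (B - 1) with h1 | h1
    · rw [max_eq_left h1, min_eq_right (by linarith : B - 1 ≤ B + 1)]
      rw [abs_of_nonpos (by linarith), abs_of_nonpos (by linarith)]
      linarith
    · rw [max_eq_right h1]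
      rcases le_total (B + 1) v with h2 | h2
      · rw [min_eq_left h2]
        rw [abs_of_nonneg (by linarith), abs_of_nonneg (by linarith)]
        linarith
      · rw [min_eq_right h2]
  calc m * |min (B + 1) (max (B - 1) v) - A| ≤ m * |v - A| := by
        apply mul_le_mul_of_nonneg_left hclamp (by linarith)
    _ ≤ |ψ|/2 + τ/2 := hmain
    _ ≤ 2 * |ψ| + τ := by have := abs_nonneg ψ; linarith
end

section
/- Let (Ω, 𝔉, μ) be a finite measure space, let a < b be real numbers, let C > 0, and let h : Ω × ℝ → ℝ be measurable such that for every x ∈ Ω the function u ↦ h(x,u) is continuous on [a,b] and |h(x,u)| ≤ C for all x ∈ Ω and u ∈ [a,b]. Let ū : Ω → [a,b] be measurable and suppose that ∫_Ω h(x, ū(x)) dμ(x) ≥ ∫_Ω h(x, u(x)) dμ(x) for every measurable function u : Ω → [a,b]. Then for μ-almost every x ∈ Ω, h(x, ū(x)) = max_{u ∈ [a,b]} h(x, u). -/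
open MeasureTheory

/-- Passage from the integrated maximum condition to the pointwise a.e. maximum
condition: if `ū` maximizes `u ↦ ∫ h(x, u(x)) dμ` over measurable `[a,b]`-valued
controls, then for a.e. `x`, `h(x, ū(x)) = max_{u ∈ [a,b]} h(x,u)`. -/
theorem stmt_5 {Ω : Type*} [MeasurableSpace Ω] (μ : Measure Ω) [IsFiniteMeasure μ]
    (a b : ℝ) (hab : a < b) (C : ℝ) (hC : 0 < C)
    (h : Ω → ℝ → ℝ) (hmeas : Measurable (Function.uncurry h))
    (hcont : ∀ x, ContinuousOn (h x) (Set.Icc a b))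
    (hbound : ∀ x, ∀ u ∈ Set.Icc a b, |h x u| ≤ C)
    (ubar : Ω → ℝ) (hubar_meas : Measurable ubar)
    (hubar_mem : ∀ x, ubar x ∈ Set.Icc a b)
    (hopt : ∀ u : Ω → ℝ, Measurable u → (∀ x, u x ∈ Set.Icc a b) →
      ∫ x, h x (u x) ∂μ ≤ ∫ x, h x (ubar x) ∂μ) :
    ∀ᵐ x ∂μ, IsMaxOn (h x) (Set.Icc a b) (ubar x) := by
  -- measurability of composed functions
  have hm : ∀ (u : Ω → ℝ), Measurable u → Measurable (fun x => h x (u x)) := by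
    intro u hu
    exact hmeas.comp (measurable_id.prodMk hu)
  -- integrability
  have hint : ∀ (u : Ω → ℝ), Measurable u → (∀ x, u x ∈ Set.Icc a b) →
      Integrable (fun x => h x (u x)) μ := by
    intro u hu hmem
    refine (integrable_const C).mono' ((hm u hu).aestronglyMeasurable) ?_
    filter_upwards with x
    rw [Real.norm_eq_abs]
    exact hbound x _ (hmem x)
  have hint_ubar : Integrable (fun x => h x (ubar x)) μ := hint ubar hubar_meas hubar_mem
  -- main claim: switching sets are null
  have main : ∀ q : ℝ, q ∈ Set.Icc a b → ∀ ε : ℝ, 0 < ε →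
      μ {x | h x (ubar x) + ε ≤ h x q} = 0 := by
    intro q hq ε hε
    set A : Set Ω := {x | h x (ubar x) + ε ≤ h x q} with hA_def
    have hmq : Measurable (fun x => h x q) := hm (fun _ => q) measurable_const
    have hA : MeasurableSet A :=
      measurableSet_le ((hm ubar hubar_meas).add measurable_const) hmq
    set u : Ω → ℝ := A.piecewise (fun _ => q) ubar with hu_def
    have hu_meas : Measurable u := Measurable.piecewise hA measurable_const hubar_meas
    have hu_mem : ∀ x, u x ∈ Set.Icc a b := by
      intro x
      by_cases hx : x ∈ A
      · simp [hu_def, Set.piecewise, hx, hq]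
      · simp [hu_def, Set.piecewise, hx, hubar_mem x]
    have hopt' := hopt u hu_meas hu_mem
    have heq : (fun x => h x (u x)) =
        A.piecewise (fun x => h x q) (fun x => h x (ubar x)) := by
      funext x
      by_cases hx : x ∈ A <;> simp [hu_def, Set.piecewise, hx]
    have hint_q : Integrable (fun x => h x q) μ :=
      hint (fun _ => q) measurable_const (fun _ => hq)
    have hsplit : ∫ x, h x (u x) ∂μ =
        (∫ x in A, h x q ∂μ) + ∫ x in Aᶜ, h x (ubar x) ∂μ := by
      rw [heq]
      exact integral_piecewise hA hint_q.integrableOn hint_ubar.integrableOn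
    have hsplit2 : ∫ x, h x (ubar x) ∂μ =
        (∫ x in A, h x (ubar x) ∂μ) + ∫ x in Aᶜ, h x (ubar x) ∂μ :=
      (integral_add_compl hA hint_ubar).symm
    have hle : ∫ x in A, h x q ∂μ ≤ ∫ x in A, h x (ubar x) ∂μ := by
      rw [hsplit, hsplit2] at hopt'
      linarith
    have hAfin : μ A ≠ ⊤ := measure_ne_top μ A
    -- lower bound on ∫_A h x q
    have hge : (∫ x in A, h x (ubar x) ∂μ) + ε * (μ A).toReal ≤ ∫ x in A, h x q ∂μ := by
      have h1 : ∫ x in A, (h x (ubar x) + ε) ∂μ ≤ ∫ x in A, h x q ∂μ := by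
        refine setIntegral_mono_on (hint_ubar.integrableOn.add (integrable_const ε).integrableOn)
          hint_q.integrableOn hA ?_
        intro x hx
        exact hx
      have h2 : ∫ x in A, (h x (ubar x) + ε) ∂μ =
          (∫ x in A, h x (ubar x) ∂μ) + ε * (μ A).toReal := by
        rw [integral_add hint_ubar.integrableOn (integrable_const ε).integrableOn,
          setIntegral_const, smul_eq_mul, mul_comm, measureReal_def]
      linarith
    have hzero : (μ A).toReal = 0 := by
      have hpos : 0 ≤ (μ A).toReal := ENNReal.toReal_nonneg
      nlinarith
    exact (ENNReal.toReal_eq_zero_iff _).1 hzero |>.resolve_right hAfin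
  -- combine over rationals and 1/(n+1)
  have key : ∀ᵐ x ∂μ, ∀ q : ℚ, (q : ℝ) ∈ Set.Icc a b → h x q ≤ h x (ubar x) := by
    rw [ae_all_iff]
    intro q
    by_cases hq : (q : ℝ) ∈ Set.Icc a b
    · have hn : ∀ n : ℕ, ∀ᵐ x ∂μ, h x q < h x (ubar x) + 1 / (n + 1) := by
        intro n
        rw [ae_iff]
        have : {x | ¬ h x q < h x (ubar x) + 1 / (n + 1)} =
            {x | h x (ubar x) + 1 / (n + 1) ≤ h x q} := by
          ext x; simp [not_lt]
        rw [this]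
        exact main q hq (1 / (n + 1)) (by positivity)
      filter_upwards [ae_all_iff.2 hn] with x hx _
      by_contra hcon
      push_neg at hcon
      obtain ⟨n, hn'⟩ := exists_nat_one_div_lt (sub_pos.2 hcon)
      have := hx n
      linarith
    · filter_upwards with x hq'
      exact absurd hq' hq
  -- conclude via density of rationals and continuity
  filter_upwards [key] with x hx
  intro u hu
  simp only [Set.mem_setOf_eq]
  -- show h x u ≤ h x (ubar x)
  by_contra hcon
  push_neg at hcon
  set ε := h x u - h x (ubar x) with hε_def
  have hεpos : 0 < ε := sub_pos.2 hcon
  have hcw : ContinuousWithinAt (h x) (Set.Icc a b) u := hcont x u hu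
  rw [Metric.continuousWithinAt_iff] at hcw
  obtain ⟨δ, hδpos, hδ⟩ := hcw ε hεpos
  -- find a rational in Icc a b within δ of u
  obtain ⟨q, hq_mem, hq_close⟩ : ∃ q : ℚ, (q : ℝ) ∈ Set.Icc a b ∧ |(q : ℝ) - u| < δ := by
    rcases lt_or_eq_of_le hu.2 with hub | hub
    · -- u < b : pick rational in (u, min b (u + δ))
      have hlt : u < min b (u + δ) := lt_min hub (by linarith)
      obtain ⟨q, hq1, hq2⟩ := exists_rat_btwn hlt
      refine ⟨q, ⟨le_trans hu.1 hq1.le, le_trans hq2.le (min_le_left _ _)⟩, ?_⟩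
      rw [abs_lt]
      constructor
      · linarith
      · have := lt_of_lt_of_le hq2 (min_le_right _ _)
        linarith
    · -- u = b : pick rational in (max a (b - δ), b)
      have hlt : max a (b - δ) < b := max_lt hab (by linarith)
      obtain ⟨q, hq1, hq2⟩ := exists_rat_btwn hlt
      refine ⟨q, ⟨le_trans (le_max_left _ _) hq1.le, hq2.le⟩, ?_⟩
      rw [hub, abs_lt]
      constructor
      · have := lt_of_le_of_lt (le_max_right a (b - δ)) hq1
        linarith
      · linarith
  have hdist : dist (q : ℝ) u < δ := by rwa [Real.dist_eq]
  have := hδ hq_mem hdist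
  rw [Real.dist_eq] at this
  have habs := abs_lt.1 this
  have hq_le := hx q hq_mem
  linarith [habs.1, habs.2]
end
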